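/- The equation σ(z) = 1, where σ(z) = ∑_{ℓ≥1} (-1)^{ℓ-1} z^ℓ/(1-z^ℓ), has exactly one real solution ρ in the open interval (0,1), and this solution satisfies 0.571349 < ρ < 0.571350. -/

import Mathlib

/-- `σ(z) = ∑_{ℓ≥1} (-1)^{ℓ-1} z^ℓ/(1-z^ℓ)` for real `z`. -/
noncomputable def sigmaFn (z : ℝ) : ℝ :=
  ∑' ℓ : ℕ, (-1 : ℝ) ^ ℓ * z ^ (ℓ + 1) / (1 - z ^ (ℓ + 1))

/-- auxiliary: `τ(z) = ∑ z^{ℓ}/(1+z^{ℓ})`. -/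
noncomputable def tauFn (z : ℝ) : ℝ :=
  ∑' ℓ : ℕ, z ^ (ℓ + 1) / (1 + z ^ (ℓ + 1))

lemma powLeSelf {z : ℝ} (hz0 : 0 ≤ z) (hz1 : z < 1) (k : ℕ) : z ^ (k + 1) ≤ z :=
  pow_le_of_le_one hz0 hz1.le (Nat.succ_ne_zero k)

lemma summable_f {z : ℝ} (hz0 : 0 ≤ z) (hz1 : z < 1) :
    Summable (fun k : ℕ => z ^ (k + 1) / (1 - z ^ (k + 1))) := by
  have h1 : ∀ k : ℕ, 1 - z ≤ 1 - z ^ (k + 1) := fun k => by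
    have := powLeSelf hz0 hz1 k; linarith
  have hz : 0 < 1 - z := by linarith
  apply Summable.of_nonneg_of_le
    (f := fun k : ℕ => (z * (1 - z)⁻¹) * z ^ k)
  · intro k
    have hk : 0 < 1 - z ^ (k + 1) := lt_of_lt_of_le hz (h1 k)
    positivity
  · intro k
    have hk : 0 < 1 - z ^ (k + 1) := lt_of_lt_of_le hz (h1 k)
    have : z ^ (k + 1) / (1 - z ^ (k + 1)) ≤ z ^ (k + 1) / (1 - z) :=
      div_le_div_of_nonneg_left (by positivity) hz (h1 k)
    calc z ^ (k + 1) / (1 - z ^ (k + 1)) ≤ z ^ (k + 1) / (1 - z) := this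
      _ = (z * (1 - z)⁻¹) * z ^ k := by
          rw [pow_succ]; ring
  · exact (summable_geometric_of_lt_one hz0 hz1).mul_left _

lemma summable_g {z : ℝ} (hz0 : 0 ≤ z) (hz1 : z < 1) :
    Summable (fun k : ℕ => z ^ (k + 1) / (1 + z ^ (k + 1))) := by
  apply Summable.of_nonneg_of_le (f := fun k : ℕ => z * z ^ k)
  · intro k
    have hk : (0:ℝ) < 1 + z ^ (k + 1) := by positivity
    positivity
  · intro k
    have hk : (0:ℝ) < 1 + z ^ (k + 1) := by positivity
    calc z ^ (k + 1) / (1 + z ^ (k + 1)) ≤ z ^ (k + 1) / 1 := by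
          apply div_le_div_of_nonneg_left (by positivity) one_pos
          linarith [pow_nonneg hz0 (k+1)]
      _ = z * z ^ k := by rw [div_one, pow_succ]; ring
  · exact (summable_geometric_of_lt_one hz0 hz1).mul_left _

lemma sigma_eq_tau {z : ℝ} (hz0 : 0 ≤ z) (hz1 : z < 1) : sigmaFn z = tauFn z := by
  set f : ℕ → ℝ := fun k => z ^ (k + 1) / (1 - z ^ (k + 1)) with hf_def
  have hf : Summable f := summable_f hz0 hz1
  have h2inj : Function.Injective (fun k : ℕ => 2 * k) := fun a b h => by dsimp at h; omega
  have h2inj' : Function.Injective (fun k : ℕ => 2 * k + 1) := fun a b h => by dsimp at h; omega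
  have hfe : Summable (fun k => f (2 * k)) := hf.comp_injective h2inj
  have hfo : Summable (fun k => f (2 * k + 1)) := hf.comp_injective h2inj'
  -- sigmaFn as even minus odd
  set s : ℕ → ℝ := fun k => (-1 : ℝ) ^ k * z ^ (k + 1) / (1 - z ^ (k + 1)) with hs_def
  have hse : ∀ k, s (2 * k) = f (2 * k) := by
    intro k; simp only [hs_def, hf_def, pow_mul, neg_one_sq, one_pow, one_mul]
  have hso : ∀ k, s (2 * k + 1) = -f (2 * k + 1) := by
    intro k
    simp only [hs_def, hf_def, pow_succ, pow_mul, neg_one_sq, one_pow, one_mul]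
    ring
  have hsigma : sigmaFn z = ∑' k, f (2 * k) - ∑' k, f (2 * k + 1) := by
    have := tsum_even_add_odd (f := s)
      (by simpa only [hse] using hfe)
      (by
        have : Summable (fun k => -f (2 * k + 1)) := hfo.neg
        simpa only [hso] using this)
    rw [sigmaFn]
    rw [show (∑' ℓ : ℕ, (-1 : ℝ) ^ ℓ * z ^ (ℓ + 1) / (1 - z ^ (ℓ + 1))) = ∑' k, s k from rfl]
    rw [← this]
    simp only [hse, hso]
    rw [tsum_neg]; ring
  -- tauFn as even minus odd
  have hgf : ∀ k : ℕ, z ^ (k + 1) / (1 + z ^ (k + 1)) = f k - 2 * f (2 * k + 1) := by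
    intro k
    have hm : z ^ (k + 1) < 1 := by
      calc z ^ (k+1) ≤ z := powLeSelf hz0 hz1 k
        _ < 1 := hz1
    have hm0 : 0 ≤ z ^ (k + 1) := pow_nonneg hz0 _
    have h1 : (1 : ℝ) - z ^ (k + 1) ≠ 0 := by linarith
    have h2 : (1 : ℝ) + z ^ (k + 1) ≠ 0 := by linarith
    have hsq : z ^ (2 * k + 1 + 1) = z ^ (k + 1) * z ^ (k + 1) := by
      rw [← pow_add]; ring_nf
    have key : ∀ m : ℝ, 0 ≤ m → m < 1 →
        m / (1 + m) = m / (1 - m) - 2 * (m * m / (1 - m * m)) := by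
      intro m h0 h1
      have ha : (1:ℝ) - m ≠ 0 := by linarith
      have hb : (1:ℝ) + m ≠ 0 := by linarith
      have hc : (1:ℝ) - m * m ≠ 0 := by nlinarith
      have hc2 : (1:ℝ) - m ^ 2 ≠ 0 := by rw [sq]; exact hc
      field_simp
      ring
    simp only [hf_def]
    rw [hsq]
    exact key _ hm0 hm
  have htau : tauFn z = ∑' k, f (2 * k) - ∑' k, f (2 * k + 1) := by
    rw [tauFn]
    calc (∑' k : ℕ, z ^ (k + 1) / (1 + z ^ (k + 1)))
        = ∑' k : ℕ, (f k - 2 * f (2 * k + 1)) := by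
          exact tsum_congr hgf
      _ = ∑' k, f k - 2 * ∑' k, f (2 * k + 1) := by
          rw [Summable.tsum_sub hf (hfo.mul_left 2), tsum_mul_left]
      _ = (∑' k, f (2 * k) + ∑' k, f (2 * k + 1)) - 2 * ∑' k, f (2 * k + 1) := by
          rw [tsum_even_add_odd hfe hfo]
      _ = ∑' k, f (2 * k) - ∑' k, f (2 * k + 1) := by ring
  rw [hsigma, htau]

lemma tau_strictMono {x y : ℝ} (hx0 : 0 ≤ x) (hxy : x < y) (hy1 : y < 1) :
    tauFn x < tauFn y := by
  have hy0 : 0 ≤ y := le_trans hx0 hxy.le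
  apply Summable.tsum_lt_tsum (i := 0)
  · intro k
    have hp : x ^ (k + 1) ≤ y ^ (k + 1) := pow_le_pow_left₀ hx0 hxy.le _
    have hx' : (0:ℝ) < 1 + x ^ (k + 1) := by positivity
    have hy' : (0:ℝ) < 1 + y ^ (k + 1) := by positivity
    rw [div_le_div_iff₀ hx' hy']
    nlinarith [pow_nonneg hx0 (k+1), pow_nonneg hy0 (k+1)]
  · have hp : x ^ (0 + 1) < y ^ (0 + 1) := by simpa using hxy
    have hx' : (0:ℝ) < 1 + x ^ (0 + 1) := by positivity
    have hy' : (0:ℝ) < 1 + y ^ (0 + 1) := by positivity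
    rw [div_lt_div_iff₀ hx' hy']
    simp only [zero_add, pow_one] at *
    nlinarith
  · exact summable_g hx0 (lt_trans hxy hy1)
  · exact summable_g hy0 hy1

lemma tau_continuousOn {b : ℝ} (hb0 : 0 ≤ b) (hb1 : b < 1) :
    ContinuousOn tauFn (Set.Icc 0 b) := by
  rw [continuousOn_iff_continuous_restrict]
  have : (Set.Icc (0:ℝ) b).restrict tauFn =
      fun x : Set.Icc (0:ℝ) b => ∑' n : ℕ, (x:ℝ) ^ (n + 1) / (1 + (x:ℝ) ^ (n + 1)) := rfl
  show Continuous (fun x : Set.Icc (0:ℝ) b => ∑' n : ℕ, (x:ℝ) ^ (n + 1) / (1 + (x:ℝ) ^ (n + 1)))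
  apply continuous_tsum (u := fun n : ℕ => b * b ^ n)
  · intro n
    apply Continuous.div
    · exact (continuous_subtype_val.pow _)
    · exact continuous_const.add (continuous_subtype_val.pow _)
    · intro x
      have hx0 : (0:ℝ) ≤ (x:ℝ) := x.2.1
      have : (0:ℝ) < 1 + (x:ℝ) ^ (n + 1) := by positivity
      linarith
  · exact (summable_geometric_of_lt_one hb0 hb1).mul_left _
  · intro n x
    have hx0 : (0:ℝ) ≤ (x:ℝ) := x.2.1
    have hxb : (x:ℝ) ≤ b := x.2.2
    have hd : (0:ℝ) < 1 + (x:ℝ) ^ (n + 1) := by positivity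
    rw [Real.norm_eq_abs, abs_of_nonneg (by positivity)]
    calc (x:ℝ) ^ (n + 1) / (1 + (x:ℝ) ^ (n + 1)) ≤ (x:ℝ) ^ (n + 1) / 1 := by
          apply div_le_div_of_nonneg_left (by positivity) one_pos
          linarith [pow_nonneg hx0 (n+1)]
      _ = (x:ℝ) ^ (n + 1) := div_one _
      _ ≤ b ^ (n + 1) := pow_le_pow_left₀ hx0 hxb _
      _ = b * b ^ n := by rw [pow_succ]; ring

lemma tau_lower {z : ℝ} (hz0 : 0 ≤ z) (hz1 : z < 1) (N : ℕ) :
    ∑ i ∈ Finset.range N, z ^ (i + 1) / (1 + z ^ (i + 1)) ≤ tauFn z := by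
  have hg := summable_g hz0 hz1
  have := Summable.sum_add_tsum_nat_add (f := fun k : ℕ => z ^ (k + 1) / (1 + z ^ (k + 1))) N hg
  rw [tauFn, ← this]
  have htail : 0 ≤ ∑' i : ℕ, z ^ (i + N + 1) / (1 + z ^ (i + N + 1)) := by
    apply tsum_nonneg
    intro i
    have : (0:ℝ) < 1 + z ^ (i + N + 1) := by positivity
    positivity
  linarith [htail]

lemma tau_upper {z : ℝ} (hz0 : 0 ≤ z) (hz1 : z < 1) (N : ℕ) :
    tauFn z ≤ ∑ i ∈ Finset.range N, z ^ (i + 1) / (1 + z ^ (i + 1))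
      + z ^ (N + 1) * (1 - z)⁻¹ := by
  have hg := summable_g hz0 hz1
  have heq := Summable.sum_add_tsum_nat_add (f := fun k : ℕ => z ^ (k + 1) / (1 + z ^ (k + 1))) N hg
  rw [tauFn, ← heq]
  have htail : (∑' i : ℕ, z ^ (i + N + 1) / (1 + z ^ (i + N + 1)))
      ≤ z ^ (N + 1) * (1 - z)⁻¹ := by
    have h1 : (∑' i : ℕ, z ^ (i + N + 1) / (1 + z ^ (i + N + 1)))
        ≤ ∑' i : ℕ, z ^ (N + 1) * z ^ i := by
      apply Summable.tsum_le_tsum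
      · intro i
        have hd : (0:ℝ) < 1 + z ^ (i + N + 1) := by positivity
        calc z ^ (i + N + 1) / (1 + z ^ (i + N + 1)) ≤ z ^ (i + N + 1) / 1 := by
              apply div_le_div_of_nonneg_left (by positivity) one_pos
              linarith [pow_nonneg hz0 (i + N + 1)]
          _ = z ^ (N + 1) * z ^ i := by rw [div_one, ← pow_add]; ring_nf
      · exact (hg.comp_injective (fun a b h => by dsimp at h; omega : Function.Injective (· + N)))
      · exact (summable_geometric_of_lt_one hz0 hz1).mul_left _
    rw [tsum_mul_left, tsum_geometric_of_lt_one hz0 hz1] at h1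
    exact h1
  linarith

/-- The equation `σ(z) = 1` has exactly one real solution `ρ` in `(0,1)`,
and `0.571349 < ρ < 0.571350`. -/
theorem sigma_eq_one_unique_root :
    ∃ ρ : ℝ, ρ ∈ Set.Ioo (0 : ℝ) 1 ∧ sigmaFn ρ = 1 ∧
      0.571349 < ρ ∧ ρ < 0.571350 ∧
      ∀ x ∈ Set.Ioo (0 : ℝ) 1, sigmaFn x = 1 → x = ρ := by
  set a : ℝ := 0.571349 with ha_def
  set b : ℝ := 0.571350 with hb_def
  have ha0 : (0:ℝ) < a := by norm_num [ha_def]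
  have hab : a < b := by norm_num [ha_def, hb_def]
  have hb1 : b < 1 := by norm_num [hb_def]
  have ha1 : a < 1 := lt_trans hab hb1
  -- numeric endpoint bounds
  have htaua : tauFn a < 1 := by
    have h := tau_upper (z := a) (by positivity) ha1 30
    have hnum : (∑ i ∈ Finset.range 30, a ^ (i + 1) / (1 + a ^ (i + 1)))
        + a ^ (30 + 1) * (1 - a)⁻¹ < 1 := by
      simp only [Finset.sum_range_succ, Finset.sum_range_zero, ha_def]
      norm_num
    exact lt_of_le_of_lt h hnum
  have htaub : 1 < tauFn b := by
    have h := tau_lower (z := b) (by positivity) hb1 30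
    have hnum : (1:ℝ) < ∑ i ∈ Finset.range 30, b ^ (i + 1) / (1 + b ^ (i + 1)) := by
      simp only [Finset.sum_range_succ, Finset.sum_range_zero, hb_def]
      norm_num
    exact lt_of_lt_of_le hnum h
  -- IVT
  have hcont : ContinuousOn tauFn (Set.Icc a b) :=
    (tau_continuousOn (b := b) (by positivity) hb1).mono
      (Set.Icc_subset_Icc_left ha0.le)
  have hivt := intermediate_value_Icc hab.le hcont
  have hmem : (1:ℝ) ∈ Set.Icc (tauFn a) (tauFn b) := ⟨htaua.le, htaub.le⟩
  obtain ⟨ρ, hρab, hρtau⟩ := hivt hmem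
  have hρ0 : 0 < ρ := lt_of_lt_of_le ha0 hρab.1
  have hρ1 : ρ < 1 := lt_of_le_of_lt hρab.2 hb1
  have hρa : a < ρ := by
    rcases lt_or_eq_of_le hρab.1 with h | h
    · exact h
    · exfalso; rw [← h] at hρtau; linarith
  have hρb : ρ < b := by
    rcases lt_or_eq_of_le hρab.2 with h | h
    · exact h
    · exfalso; rw [h] at hρtau; linarith
  refine ⟨ρ, ⟨hρ0, hρ1⟩, ?_, hρa, hρb, ?_⟩
  · rw [sigma_eq_tau hρ0.le hρ1]; exact hρtau
  · intro x hx hsx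
    have htx : tauFn x = 1 := by rw [← sigma_eq_tau hx.1.le hx.2]; exact hsx
    rcases lt_trichotomy x ρ with h | h | h
    · exfalso
      have := tau_strictMono hx.1.le h hρ1
      rw [htx, hρtau] at this; exact lt_irrefl _ this
    · exact h
    · exfalso
      have := tau_strictMono hρ0.le h hx.2
      rw [htx, hρtau] at this; exact lt_irrefl _ this
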